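/- Under the hypotheses of the parareal convergence theorem — namely Φ, 𝓒, 𝓕 : ℝᵈ → ℝᵈ with |𝓒x − 𝓒y| ≤ (1+CH)|x−y|, |Φx − Φy| ≤ (1+CH)|x−y|, |(Φx−𝓒x) − (Φy−𝓒y)| ≤ CHE_c|x−y|, |(Φx−𝓕x) − (Φy−𝓕y)| ≤ CHE_f|x−y|, |Φx − 𝓒x| ≤ CHE_c(1+|x|), |Φx − 𝓕x| ≤ CHE_f(1+|x|), 0 ≤ E_f ≤ E_c, T = NH, and B := max over 0 ≤ n ≤ N of (1+|𝓕ⁿu₀|) + max over 0 ≤ n ≤ N of (1+|Φⁿu₀|) — the parareal iterates defined by u⁰ₙ = 𝓒ⁿu₀, uᵏ₀ = u₀, uᵏₙ = 𝓒(uᵏₙ₋₁) + 𝓕(uᵏ⁻¹ₙ₋₁) − 𝓒(uᵏ⁻¹ₙ₋₁) satisfy: there exists a constant Λ′ depending only on C, T, B such that for every k ≥ 1, max over 0 ≤ n ≤ N of |uᵏₙ − Φⁿu₀| ≤ Λ′ · (E_cᵏ + E_f). In other words, the parareal solution approximates the exact trajectory u(nH) = Φⁿu₀ up to the fine-solver accuracy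 E_f plus a term decaying geometrically like E_cᵏ in the iteration number k. -/

import Mathlib

section ParArealAux

private lemma par_tri {E : Type*} [NormedAddCommGroup E] (a b c : E) :
    ‖a - c‖ ≤ ‖a - b‖ + ‖b - c‖ := by
  have h : a - c = (a - b) + (b - c) := by abel
  rw [h]; exact norm_add_le _ _

private lemma par_gronwall (γ c : ℝ) (hγ : 1 ≤ γ)
    (N : ℕ) (e : ℕ → ℝ) (h0 : e 0 = 0)
    (hstep : ∀ n, n + 1 ≤ N → e (n + 1) ≤ γ * e n + c) :
    ∀ n, n ≤ N → e n ≤ c * ∑ j ∈ Finset.range n, γ ^ j := by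
  intro n
  induction n with
  | zero => intro _; simp [h0]
  | succ n ih =>
    intro hn
    have hn' : n ≤ N := Nat.le_of_succ_le hn
    have h1 := hstep n hn
    have h2 := ih hn'
    have hγ0 : 0 ≤ γ := le_trans zero_le_one hγ
    have h3 : γ * e n ≤ γ * (c * ∑ j ∈ Finset.range n, γ ^ j) :=
      mul_le_mul_of_nonneg_left h2 hγ0
    have h4 : ∑ j ∈ Finset.range (n + 1), γ ^ j
        = γ * ∑ j ∈ Finset.range n, γ ^ j + 1 := geom_sum_succ
    calc e (n + 1) ≤ γ * e n + c := h1
      _ ≤ γ * (c * ∑ j ∈ Finset.range n, γ ^ j) + c := by linarith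
      _ = c * ∑ j ∈ Finset.range (n + 1), γ ^ j := by rw [h4]; ring

private lemma par_geom_sum_le (γ : ℝ) (hγ : 1 ≤ γ) (N n : ℕ) (hn : n ≤ N) :
    ∑ j ∈ Finset.range n, γ ^ j ≤ (N : ℝ) * γ ^ N := by
  have hγ0 : 0 ≤ γ := le_trans zero_le_one hγ
  calc ∑ j ∈ Finset.range n, γ ^ j ≤ ∑ _j ∈ Finset.range n, γ ^ N := by
        apply Finset.sum_le_sum
        intro j hj
        have hjN : j ≤ N := le_trans (le_of_lt (Finset.mem_range.1 hj)) hn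
        exact pow_le_pow_right₀ hγ hjN
    _ = (n : ℝ) * γ ^ N := by rw [Finset.sum_const, Finset.card_range, nsmul_eq_mul]
    _ ≤ (N : ℝ) * γ ^ N := by
        have : (n : ℝ) ≤ (N : ℝ) := Nat.cast_le.2 hn
        exact mul_le_mul_of_nonneg_right this (pow_nonneg hγ0 N)

private lemma par_key_arith (L CH Ec Ef B : ℝ) (hL : 0 ≤ L) (hCH : 0 ≤ CH)
    (hEf : 0 ≤ Ef) (hEfc : Ef ≤ Ec) (hB : 0 ≤ B) (k : ℕ) :
    ((CH * Ec + CH * Ef) * ((L * CH * (2 * Ec + B + 2) + 1) ^ (k + 1) * (Ec ^ (k + 1) + Ef))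
        + CH * Ef * B) * L
      ≤ (L * CH * (2 * Ec + B + 2) + 1) ^ (k + 2) * (Ec ^ (k + 2) + Ef) := by
  have hEc : 0 ≤ Ec := hEf.trans hEfc
  set M : ℝ := L * CH * (2 * Ec + B + 2) + 1 with hM
  have hM0 : 0 ≤ L * CH * (2 * Ec + B + 2) :=
    mul_nonneg (mul_nonneg hL hCH) (by linarith)
  have hM1 : (1 : ℝ) ≤ M := by rw [hM]; linarith
  set P : ℝ := M ^ (k + 1) with hP
  have hP1 : (1 : ℝ) ≤ P := one_le_pow₀ hM1
  have hP0 : (0 : ℝ) ≤ P := le_trans zero_le_one hP1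
  set Q : ℝ := Ec ^ (k + 1) with hQ
  have hQ0 : (0 : ℝ) ≤ Q := pow_nonneg hEc _
  have hMk2 : M ^ (k + 2) = P * M := by rw [hP, pow_succ]
  have hEk2 : Ec ^ (k + 2) = Q * Ec := by rw [hQ, pow_succ]
  rw [hMk2, hEk2]
  have h2LCH : 2 * L * CH ≤ M := by nlinarith
  have hMEc : 2 * L * CH * Ec + L * CH * B ≤ M := by nlinarith
  have t1 : 0 ≤ P * Q * Ec * (M - 2 * L * CH) :=
    mul_nonneg (mul_nonneg (mul_nonneg hP0 hQ0) hEc) (by linarith)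
  have t2 : 0 ≤ (P - 1) * (L * CH * B * Ef) :=
    mul_nonneg (by linarith) (mul_nonneg (mul_nonneg (mul_nonneg hL hCH) hB) hEf)
  have t3 : 0 ≤ P * Ef * (M - (2 * L * CH * Ec + L * CH * B)) :=
    mul_nonneg (mul_nonneg hP0 hEf) (by linarith)
  have t4 : 0 ≤ L * CH * (Ec - Ef) * (P * (Q + Ef)) :=
    mul_nonneg (mul_nonneg (mul_nonneg hL hCH) (by linarith))
      (mul_nonneg hP0 (by linarith))
  nlinarith [t1, t2, t3, t4]

end ParArealAux

/-- Convergence of the parareal iteration to the exact trajectory: under the standard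
stability and accuracy hypotheses on the exact flow `Φ`, the coarse propagator `𝓒`
(accuracy level `E_c`) and the fine propagator `𝓕` (accuracy level `E_f ≤ E_c`),
there is a constant `Λ'` (depending only on `C`, `T`, `B`) such that the `k`-th
parareal iterate satisfies
`max_{0 ≤ n ≤ N} ‖uᵏₙ - Φⁿ u₀‖ ≤ Λ' * (E_c ^ k + E_f)`. -/
theorem parareal_convergence_to_exact
    (d : ℕ) (hd : 1 ≤ d)
    (C H : ℝ) (hC : 0 < C) (hH : 0 < H)
    (N : ℕ) (T : ℝ) (hT : T = (N : ℝ) * H)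
    (Ef Ec : ℝ) (hEf : 0 ≤ Ef) (hEfc : Ef ≤ Ec)
    (u₀ : EuclideanSpace ℝ (Fin d))
    (Φ 𝓒 𝓕 : EuclideanSpace ℝ (Fin d) → EuclideanSpace ℝ (Fin d))
    (h𝓒stab : ∀ x y, ‖𝓒 x - 𝓒 y‖ ≤ (1 + C * H) * ‖x - y‖)
    (hΦstab : ∀ x y, ‖Φ x - Φ y‖ ≤ (1 + C * H) * ‖x - y‖)
    (hδ𝓒 : ∀ x y, ‖(Φ x - 𝓒 x) - (Φ y - 𝓒 y)‖ ≤ C * H * Ec * ‖x - y‖)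
    (hδ𝓕 : ∀ x y, ‖(Φ x - 𝓕 x) - (Φ y - 𝓕 y)‖ ≤ C * H * Ef * ‖x - y‖)
    (h𝓒acc : ∀ x, ‖Φ x - 𝓒 x‖ ≤ C * H * Ec * (1 + ‖x‖))
    (h𝓕acc : ∀ x, ‖Φ x - 𝓕 x‖ ≤ C * H * Ef * (1 + ‖x‖))
    (B : ℝ)
    (hB : B = (Finset.range (N + 1)).sup' Finset.nonempty_range_add_one
        (fun n => 1 + ‖𝓕^[n] u₀‖)
      + (Finset.range (N + 1)).sup' Finset.nonempty_range_add_one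
        (fun n => 1 + ‖Φ^[n] u₀‖))
    (u : ℕ → ℕ → EuclideanSpace ℝ (Fin d))
    (hinit : ∀ n : ℕ, u 0 n = 𝓒^[n] u₀)
    (hzero : ∀ k : ℕ, u k 0 = u₀)
    (hrec : ∀ k n : ℕ, u (k + 1) (n + 1)
      = 𝓒 (u (k + 1) n) + 𝓕 (u k n) - 𝓒 (u k n)) :
    ∃ Λ' : ℝ, 0 < Λ' ∧ ∀ k : ℕ, 1 ≤ k → ∀ n : ℕ, n ≤ N →
      ‖u k n - Φ^[n] u₀‖ ≤ Λ' * (Ec ^ k + Ef) := by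
  have hEc : 0 ≤ Ec := hEf.trans hEfc
  have hCH : 0 ≤ C * H := le_of_lt (mul_pos hC hH)
  set γ : ℝ := 1 + C * H with hγdef
  have hγ : 1 ≤ γ := by rw [hγdef]; linarith
  have hγ0 : 0 ≤ γ := le_trans zero_le_one hγ
  -- B bounds
  have hBΦ : ∀ n, n ≤ N → 1 + ‖Φ^[n] u₀‖ ≤ B := by
    intro n hn
    rw [hB]
    have h1 : 1 + ‖Φ^[n] u₀‖ ≤ (Finset.range (N + 1)).sup' Finset.nonempty_range_add_one
        (fun m => 1 + ‖Φ^[m] u₀‖) :=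
      Finset.le_sup' (fun m => 1 + ‖Φ^[m] u₀‖) (Finset.mem_range.2 (Nat.lt_succ_of_le hn))
    have h2 : (1 : ℝ) ≤ (Finset.range (N + 1)).sup' Finset.nonempty_range_add_one
        (fun m => 1 + ‖𝓕^[m] u₀‖) := by
      refine le_trans ?_ (Finset.le_sup' (fun m => 1 + ‖𝓕^[m] u₀‖)
        (Finset.mem_range.2 (Nat.succ_pos N)))
      show (1:ℝ) ≤ 1 + ‖𝓕^[0] u₀‖
      have := norm_nonneg (𝓕^[0] u₀)
      linarith
    linarith
  have hB𝓕 : ∀ n, n ≤ N → 1 + ‖𝓕^[n] u₀‖ ≤ B := by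
    intro n hn
    rw [hB]
    have h1 : 1 + ‖𝓕^[n] u₀‖ ≤ (Finset.range (N + 1)).sup' Finset.nonempty_range_add_one
        (fun m => 1 + ‖𝓕^[m] u₀‖) :=
      Finset.le_sup' (fun m => 1 + ‖𝓕^[m] u₀‖) (Finset.mem_range.2 (Nat.lt_succ_of_le hn))
    have h2 : (1 : ℝ) ≤ (Finset.range (N + 1)).sup' Finset.nonempty_range_add_one
        (fun m => 1 + ‖Φ^[m] u₀‖) := by
      refine le_trans ?_ (Finset.le_sup' (fun m => 1 + ‖Φ^[m] u₀‖)
        (Finset.mem_range.2 (Nat.succ_pos N)))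
      show (1:ℝ) ≤ 1 + ‖Φ^[0] u₀‖
      have := norm_nonneg (Φ^[0] u₀)
      linarith
    linarith
  have hB0 : 0 ≤ B := by
    have := hBΦ 0 (Nat.zero_le N)
    have h01 : (0:ℝ) ≤ 1 + ‖Φ^[0] u₀‖ := by positivity
    linarith
  set L : ℝ := (N : ℝ) * γ ^ N with hLdef
  have hL : 0 ≤ L := by
    rw [hLdef]; exact mul_nonneg (Nat.cast_nonneg N) (pow_nonneg hγ0 N)
  set M : ℝ := L * (C * H) * (2 * Ec + B + 2) + 1 with hMdef
  have hM0 : 0 ≤ L * (C * H) * (2 * Ec + B + 2) :=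
    mul_nonneg (mul_nonneg hL hCH) (by linarith)
  have hM1 : (1 : ℝ) ≤ M := by rw [hMdef]; linarith
  -- exactness: u k n = 𝓕^[n] u₀ for n ≤ k
  have hexact : ∀ n k, n ≤ k → u k n = 𝓕^[n] u₀ := by
    intro n
    induction n with
    | zero => intro k _; rw [hzero, Function.iterate_zero_apply]
    | succ n ih =>
      intro k hk
      obtain ⟨m, rfl⟩ : ∃ m, k = m + 1 := ⟨k - 1, by omega⟩
      have hnm : n ≤ m := by omega
      rw [hrec m n, ih (m + 1) (le_trans hnm (Nat.le_succ m)), ih m hnm,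
        Function.iterate_succ_apply']
      abel
  -- fine propagator error
  have hfine : ∀ n, n ≤ N → ‖𝓕^[n] u₀ - Φ^[n] u₀‖ ≤ C * H * Ef * B * L := by
    have hstep : ∀ n, n + 1 ≤ N →
        ‖𝓕^[n+1] u₀ - Φ^[n+1] u₀‖ ≤ γ * ‖𝓕^[n] u₀ - Φ^[n] u₀‖ + C * H * Ef * B := by
      intro n hn
      have hn' : n ≤ N := Nat.le_of_succ_le hn
      rw [Function.iterate_succ_apply' 𝓕, Function.iterate_succ_apply' Φ]
      set x := 𝓕^[n] u₀
      set y := Φ^[n] u₀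
      have t1 : ‖𝓕 x - Φ y‖ ≤ ‖𝓕 x - Φ x‖ + ‖Φ x - Φ y‖ := par_tri _ _ _
      have t2 : ‖𝓕 x - Φ x‖ = ‖Φ x - 𝓕 x‖ := norm_sub_rev _ _
      have t3 : ‖Φ x - 𝓕 x‖ ≤ C * H * Ef * (1 + ‖x‖) := h𝓕acc x
      have t4 : C * H * Ef * (1 + ‖x‖) ≤ C * H * Ef * B :=
        mul_le_mul_of_nonneg_left (hB𝓕 n hn') (mul_nonneg hCH hEf)
      have t5 : ‖Φ x - Φ y‖ ≤ γ * ‖x - y‖ := hΦstab x y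
      calc ‖𝓕 x - Φ y‖ ≤ ‖𝓕 x - Φ x‖ + ‖Φ x - Φ y‖ := t1
        _ ≤ C * H * Ef * B + γ * ‖x - y‖ := by rw [t2]; linarith
        _ = γ * ‖x - y‖ + C * H * Ef * B := by ring
    have h0 : ‖𝓕^[0] u₀ - Φ^[0] u₀‖ = 0 := by simp
    have key := par_gronwall γ (C * H * Ef * B) hγ N
      (fun n => ‖𝓕^[n] u₀ - Φ^[n] u₀‖) h0 hstep
    intro n hn
    have := key n hn
    have hcc : 0 ≤ C * H * Ef * B := mul_nonneg (mul_nonneg hCH hEf) hB0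
    calc ‖𝓕^[n] u₀ - Φ^[n] u₀‖ ≤ C * H * Ef * B * ∑ j ∈ Finset.range n, γ ^ j := this
      _ ≤ C * H * Ef * B * L := by
          rw [hLdef]
          exact mul_le_mul_of_nonneg_left (par_geom_sum_le γ hγ N n hn) hcc
  -- main estimate by induction on k
  have main : ∀ k, ∀ n, n ≤ N →
      ‖u k n - Φ^[n] u₀‖ ≤ M ^ (k + 1) * (Ec ^ (k + 1) + Ef) := by
    intro k
    induction k with
    | zero =>
      have hstep : ∀ n, n + 1 ≤ N →
          ‖u 0 (n+1) - Φ^[n+1] u₀‖ ≤ γ * ‖u 0 n - Φ^[n] u₀‖ + C * H * Ec * B := by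
        intro n hn
        have hn' : n ≤ N := Nat.le_of_succ_le hn
        rw [hinit (n + 1), hinit n, Function.iterate_succ_apply' 𝓒,
          Function.iterate_succ_apply' Φ]
        set x := 𝓒^[n] u₀
        set y := Φ^[n] u₀
        have t1 : ‖𝓒 x - Φ y‖ ≤ ‖𝓒 x - 𝓒 y‖ + ‖𝓒 y - Φ y‖ := par_tri _ _ _
        have t2 : ‖𝓒 y - Φ y‖ = ‖Φ y - 𝓒 y‖ := norm_sub_rev _ _
        have t3 : ‖Φ y - 𝓒 y‖ ≤ C * H * Ec * (1 + ‖y‖) := h𝓒acc y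
        have t4 : C * H * Ec * (1 + ‖y‖) ≤ C * H * Ec * B :=
          mul_le_mul_of_nonneg_left (hBΦ n hn') (mul_nonneg hCH hEc)
        have t5 : ‖𝓒 x - 𝓒 y‖ ≤ γ * ‖x - y‖ := h𝓒stab x y
        calc ‖𝓒 x - Φ y‖ ≤ ‖𝓒 x - 𝓒 y‖ + ‖𝓒 y - Φ y‖ := t1
          _ ≤ γ * ‖x - y‖ + C * H * Ec * B := by rw [t2]; linarith
      have h0 : ‖u 0 0 - Φ^[0] u₀‖ = 0 := by rw [hzero]; simp
      have key := par_gronwall γ (C * H * Ec * B) hγ N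
        (fun n => ‖u 0 n - Φ^[n] u₀‖) h0 hstep
      intro n hn
      have hcc : 0 ≤ C * H * Ec * B := mul_nonneg (mul_nonneg hCH hEc) hB0
      have h1 : ‖u 0 n - Φ^[n] u₀‖ ≤ C * H * Ec * B * L := by
        calc ‖u 0 n - Φ^[n] u₀‖ ≤ C * H * Ec * B * ∑ j ∈ Finset.range n, γ ^ j := key n hn
          _ ≤ C * H * Ec * B * L := by
              rw [hLdef]
              exact mul_le_mul_of_nonneg_left (par_geom_sum_le γ hγ N n hn) hcc
      refine le_trans h1 ?_
      have hMB : L * (C * H) * B ≤ M := by rw [hMdef]; nlinarith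
      have : C * H * Ec * B * L = (L * (C * H) * B) * Ec := by ring
      rw [this, pow_one, pow_one]
      nlinarith [mul_le_mul_of_nonneg_right hMB hEc,
        mul_nonneg (le_trans zero_le_one hM1) hEf]
    | succ k ih =>
      set c : ℝ := (C * H * Ec + C * H * Ef) * (M ^ (k + 1) * (Ec ^ (k + 1) + Ef))
        + C * H * Ef * B with hcdef
      have hMk0 : (0:ℝ) ≤ M ^ (k + 1) := pow_nonneg (le_trans zero_le_one hM1) _
      have hEk0 : (0:ℝ) ≤ Ec ^ (k + 1) + Ef := by
        have := pow_nonneg hEc (k + 1); linarith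
      have hc0 : 0 ≤ c := by
        rw [hcdef]
        have := mul_nonneg (mul_nonneg hCH hEf) hB0
        have h2 : 0 ≤ (C * H * Ec + C * H * Ef) := by
          have := mul_nonneg hCH hEc; have := mul_nonneg hCH hEf; linarith
        nlinarith [mul_nonneg hMk0 hEk0]
      have hstep : ∀ n, n + 1 ≤ N →
          ‖u (k+1) (n+1) - Φ^[n+1] u₀‖ ≤ γ * ‖u (k+1) n - Φ^[n] u₀‖ + c := by
        intro n hn
        have hn' : n ≤ N := Nat.le_of_succ_le hn
        have hx := ih n hn'
        rw [hrec k n, Function.iterate_succ_apply' Φ]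
        set w := u (k + 1) n
        set x := u k n
        set y := Φ^[n] u₀
        have hdec : 𝓒 w + 𝓕 x - 𝓒 x - Φ y
            = (𝓒 w - 𝓒 y) + (((Φ x - 𝓒 x) - (Φ y - 𝓒 y)) - (Φ x - 𝓕 x)) := by abel
        have tPhiF : ‖Φ x - 𝓕 x‖ ≤ C * H * Ef * ‖x - y‖ + C * H * Ef * B := by
          have s1 : ‖Φ x - 𝓕 x‖ ≤ ‖(Φ x - 𝓕 x) - (Φ y - 𝓕 y)‖ + ‖Φ y - 𝓕 y‖ := by
            have := norm_add_le ((Φ x - 𝓕 x) - (Φ y - 𝓕 y)) (Φ y - 𝓕 y)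
            simpa using this
          have s2 := hδ𝓕 x y
          have s3 : ‖Φ y - 𝓕 y‖ ≤ C * H * Ef * B :=
            le_trans (h𝓕acc y)
              (mul_le_mul_of_nonneg_left (hBΦ n hn') (mul_nonneg hCH hEf))
          linarith
        have t0 : ‖𝓒 w + 𝓕 x - 𝓒 x - Φ y‖
            ≤ ‖𝓒 w - 𝓒 y‖ + (‖(Φ x - 𝓒 x) - (Φ y - 𝓒 y)‖ + ‖Φ x - 𝓕 x‖) := by
          rw [hdec]
          refine le_trans (norm_add_le _ _) ?_
          exact add_le_add le_rfl (norm_sub_le _ _)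
        have t1 : ‖𝓒 w - 𝓒 y‖ ≤ γ * ‖w - y‖ := h𝓒stab w y
        have t2 : ‖(Φ x - 𝓒 x) - (Φ y - 𝓒 y)‖ ≤ C * H * Ec * ‖x - y‖ := hδ𝓒 x y
        have hxy : C * H * Ec * ‖x - y‖ + C * H * Ef * ‖x - y‖
            ≤ (C * H * Ec + C * H * Ef) * (M ^ (k + 1) * (Ec ^ (k + 1) + Ef)) := by
          have h2 : 0 ≤ C * H * Ec + C * H * Ef := by
            have := mul_nonneg hCH hEc; have := mul_nonneg hCH hEf; linarith
          have := mul_le_mul_of_nonneg_left hx h2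
          linarith [this]
        calc ‖𝓒 w + 𝓕 x - 𝓒 x - Φ y‖
            ≤ ‖𝓒 w - 𝓒 y‖ + (‖(Φ x - 𝓒 x) - (Φ y - 𝓒 y)‖ + ‖Φ x - 𝓕 x‖) := t0
          _ ≤ γ * ‖w - y‖ + c := by rw [hcdef]; linarith
      have h0 : ‖u (k+1) 0 - Φ^[0] u₀‖ = 0 := by rw [hzero]; simp
      have key := par_gronwall γ c hγ N (fun n => ‖u (k+1) n - Φ^[n] u₀‖) h0 hstep
      intro n hn
      have h1 : ‖u (k+1) n - Φ^[n] u₀‖ ≤ c * L := by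
        calc ‖u (k+1) n - Φ^[n] u₀‖ ≤ c * ∑ j ∈ Finset.range n, γ ^ j := key n hn
          _ ≤ c * L := by
              rw [hLdef]
              exact mul_le_mul_of_nonneg_left (par_geom_sum_le γ hγ N n hn) hc0
      refine le_trans h1 ?_
      have harith := par_key_arith L (C * H) Ec Ef B hL hCH hEf hEfc hB0 k
      rw [← hMdef] at harith
      rw [hcdef]
      exact harith
  -- conclude
  set Λ : ℝ := M ^ N * (1 + Ec) + L * (C * H) * B + 1 with hΛdef
  have hMN0 : (0:ℝ) ≤ M ^ N := pow_nonneg (le_trans zero_le_one hM1) N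
  have hΛ1 : 0 ≤ M ^ N * (1 + Ec) := mul_nonneg hMN0 (by linarith)
  have hΛ2 : 0 ≤ L * (C * H) * B := mul_nonneg (mul_nonneg hL hCH) hB0
  refine ⟨Λ, by rw [hΛdef]; linarith, ?_⟩
  intro k hk n hn
  have hS0 : 0 ≤ Ec ^ k + Ef := by have := pow_nonneg hEc k; linarith
  rcases le_or_gt n k with hnk | hkn
  · -- use exactness
    rw [hexact n k hnk]
    refine le_trans (hfine n hn) ?_
    have hEck : 0 ≤ Ec ^ k := pow_nonneg hEc k
    have e1 : C * H * Ef * B * L = (L * (C * H) * B) * Ef := by ring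
    rw [e1]
    have e2 : (L * (C * H) * B) * Ef ≤ (L * (C * H) * B) * (Ec ^ k + Ef) :=
      mul_le_mul_of_nonneg_left (by linarith) hΛ2
    refine le_trans e2 ?_
    have : L * (C * H) * B ≤ Λ := by rw [hΛdef]; linarith
    exact mul_le_mul_of_nonneg_right this hS0
  · -- k < n ≤ N
    have hkN : k + 1 ≤ N := le_trans hkn hn
    refine le_trans (main k n hn) ?_
    have p1 : M ^ (k + 1) ≤ M ^ N := pow_le_pow_right₀ hM1 hkN
    have hMk0 : (0:ℝ) ≤ M ^ (k + 1) := pow_nonneg (le_trans zero_le_one hM1) _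
    have hEck : 0 ≤ Ec ^ k := pow_nonneg hEc k
    have q1 : Ec ^ (k + 1) + Ef ≤ (1 + Ec) * (Ec ^ k + Ef) := by
      rw [pow_succ]
      have expand : (1 + Ec) * (Ec ^ k + Ef) = Ec ^ k * Ec + Ef + (Ec ^ k + Ec * Ef) := by
        ring
      rw [expand]
      have := mul_nonneg hEc hEf
      linarith
    have hq0 : 0 ≤ Ec ^ (k + 1) + Ef := by have := pow_nonneg hEc (k+1); linarith
    calc M ^ (k + 1) * (Ec ^ (k + 1) + Ef)
        ≤ M ^ N * (Ec ^ (k + 1) + Ef) := mul_le_mul_of_nonneg_right p1 hq0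
      _ ≤ M ^ N * ((1 + Ec) * (Ec ^ k + Ef)) := mul_le_mul_of_nonneg_left q1 hMN0
      _ = (M ^ N * (1 + Ec)) * (Ec ^ k + Ef) := by ring
      _ ≤ Λ * (Ec ^ k + Ef) := by
          refine mul_le_mul_of_nonneg_right ?_ hS0
          rw [hΛdef]; linarith
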